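/- arXiv:1705.00340 — 7 statements merged into one kernel-verified Lean document; each statement's English description precedes it below -/
import Mathlib

section
/- The functional V(X) = 2·E(X) on L² is a coherent regret measure (satisfies B1–B5), but the functional R defined by R(X) = inf over y ∈ ℝ of { y + V(X − y) } is identically −∞; hence R is not a coherent risk measure. -/
/-- `V(X) = 2 E(X)` is a coherent regret measure, yet the trade-off formula
gives a functional identically `-∞` (the infimand is unbounded below). -/
theorem stmt2 {Ω : Type} [Fintype Ω] (p : Ω → ℝ) (hp : ∀ ω, 0 < p ω)
    (hsum : ∑ ω, p ω = 1) (V : (Ω → ℝ) → ℝ)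
    (hV : ∀ X : Ω → ℝ, V X = 2 * ∑ ω, p ω * X ω) :
    V 0 = 0 ∧
    (∀ X X' : Ω → ℝ, ∀ t : ℝ, 0 ≤ t → t ≤ 1 →
      V ((1 - t) • X + t • X') ≤ (1 - t) * V X + t * V X') ∧
    (∀ X X' : Ω → ℝ, (∀ ω, X ω ≤ X' ω) → V X ≤ V X') ∧
    LowerSemicontinuous V ∧
    (∀ X : Ω → ℝ, ∀ t : ℝ, 0 < t → V (t • X) = t * V X) ∧
    (∀ X : Ω → ℝ, ¬ BddBelow (Set.range fun y : ℝ => y + V (fun ω => X ω - y))) := by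
  have hVfun : V = fun X => 2 * ∑ ω, p ω * X ω := funext hV
  refine ⟨?_, ?_, ?_, ?_, ?_, ?_⟩
  · simp [hV]
  · intro X X' t ht ht1
    rw [hV, hV, hV]
    simp only [Pi.add_apply, Pi.smul_apply, smul_eq_mul]
    have : ∑ ω, p ω * ((1 - t) * X ω + t * X' ω)
        = (1 - t) * ∑ ω, p ω * X ω + t * ∑ ω, p ω * X' ω := by
      rw [Finset.mul_sum, Finset.mul_sum, ← Finset.sum_add_distrib]
      exact Finset.sum_congr rfl fun ω _ => by ring
    rw [this]; ring_nf; exact le_refl _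
  · intro X X' h
    rw [hV, hV]
    have : ∑ ω, p ω * X ω ≤ ∑ ω, p ω * X' ω :=
      Finset.sum_le_sum fun ω _ => mul_le_mul_of_nonneg_left (h ω) (hp ω).le
    linarith
  · rw [hVfun]
    apply Continuous.lowerSemicontinuous
    continuity
  · intro X t ht
    rw [hV, hV]
    simp only [Pi.smul_apply, smul_eq_mul]
    have : ∑ ω, p ω * (t * X ω) = t * ∑ ω, p ω * X ω := by
      rw [Finset.mul_sum]
      exact Finset.sum_congr rfl fun ω _ => by ring
    rw [this]; ring
  · intro X hbdd
    obtain ⟨c, hc⟩ := hbdd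
    have key : ∀ y : ℝ, (y + V (fun ω => X ω - y)) = 2 * ∑ ω, p ω * X ω - y := by
      intro y
      rw [hV]
      simp only [mul_sub]
      rw [Finset.sum_sub_distrib, ← Finset.sum_mul, hsum]
      ring
    have h1 := hc (Set.mem_range_self (2 * ∑ ω, p ω * X ω - c + 1))
    rw [key] at h1
    linarith
end

section
/- Let Q̃ ⊂ L² be nonempty, convex, compact, with every η ∈ Q̃ satisfying η ≥ 0. Define V(X) = sup over η ∈ Q̃ of E(Xη), and R(X) = sup over η ∈ Q̃ ∩ P of E(Xη), where P = { η ∈ L² : E(η)=1, η ≥ 0 }. Then for every X ∈ L², sup over η ∈ Q̃ ∩ P of E(Xη) equals inf over y ∈ ℝ of { y + V(X − y) }. -/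
/-- The minimax identity relating the regret envelope `Q̃` to the risk envelope
`Q̃ ∩ P`. -/
theorem stmt3 {Ω : Type} [Fintype Ω] (p : Ω → ℝ) (hp : ∀ ω, 0 < p ω)
    (hsum : ∑ ω, p ω = 1)
    (Qt : Set (Ω → ℝ)) (hne : Qt.Nonempty) (hconv : Convex ℝ Qt)
    (hcomp : IsCompact Qt) (hpos : ∀ η ∈ Qt, ∀ ω, 0 ≤ η ω)
    (P : Set (Ω → ℝ))
    (hP : P = {η | (∑ ω, p ω * η ω) = 1 ∧ ∀ ω, 0 ≤ η ω})
    (X : Ω → ℝ) :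
    sSup ((fun η : Ω → ℝ => ∑ ω, p ω * (X ω * η ω)) '' (Qt ∩ P)) =
      ⨅ y : ℝ,
        (y + sSup ((fun η : Ω → ℝ => ∑ ω, p ω * ((X ω - y) * η ω)) '' Qt)) := by
  classical
  set E : (Ω → ℝ) → ℝ := fun η => ∑ ω, p ω * η ω with hEdef
  set EX : (Ω → ℝ) → ℝ := fun η => ∑ ω, p ω * (X ω * η ω) with hEXdef
  have hEcont : Continuous E := by
    apply continuous_finset_sum
    exact fun ω _ => continuous_const.mul (continuous_apply ω)
  have hEXcont : Continuous EX := by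
    apply continuous_finset_sum
    exact fun ω _ => continuous_const.mul (continuous_const.mul (continuous_apply ω))
  have hkey : ∀ (y : ℝ) (η : Ω → ℝ),
      (∑ ω, p ω * ((X ω - y) * η ω)) = EX η - y * E η := by
    intro y η
    calc ∑ ω, p ω * ((X ω - y) * η ω)
        = ∑ ω, (p ω * (X ω * η ω) - y * (p ω * η ω)) :=
          Finset.sum_congr rfl fun ω _ => by ring
      _ = EX η - y * E η := by
          rw [Finset.sum_sub_distrib, ← Finset.mul_sum]
  have hrw : ∀ y : ℝ, ((fun η : Ω → ℝ => ∑ ω, p ω * ((X ω - y) * η ω)) '' Qt)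
      = ((fun η : Ω → ℝ => EX η - y * E η) '' Qt) := by
    intro y; exact Set.image_congr fun η _ => hkey y η
  simp only [hrw]
  -- basic facts about the inner suprema
  have hScont : ∀ y : ℝ, Continuous (fun η : Ω → ℝ => EX η - y * E η) :=
    fun y => hEXcont.sub (continuous_const.mul hEcont)
  have hSne : ∀ y : ℝ, ((fun η : Ω → ℝ => EX η - y * E η) '' Qt).Nonempty :=
    fun y => hne.image _
  have hSbdd : ∀ y : ℝ, BddAbove ((fun η : Ω → ℝ => EX η - y * E η) '' Qt) :=
    fun y => (hcomp.image (hScont y)).bddAbove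
  have hle_sSup : ∀ (y : ℝ) (η : Ω → ℝ), η ∈ Qt →
      EX η - y * E η ≤ sSup ((fun η : Ω → ℝ => EX η - y * E η) '' Qt) :=
    fun y η hη => le_csSup (hSbdd y) (Set.mem_image_of_mem _ hη)
  by_cases hex : ∃ η ∈ Qt, E η = 1
  · -- main case: Qt ∩ P is nonempty
    obtain ⟨η₀, hη₀Q, hη₀E⟩ := hex
    have hη₀P : η₀ ∈ P := by rw [hP]; exact ⟨hη₀E, hpos _ hη₀Q⟩
    have hTne : (EX '' (Qt ∩ P)).Nonempty := ⟨EX η₀, η₀, ⟨hη₀Q, hη₀P⟩, rfl⟩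
    have hPclosed : IsClosed P := by
      rw [hP]
      have h1 : IsClosed {η : Ω → ℝ | E η = 1} := isClosed_eq hEcont continuous_const
      have h2 : IsClosed {η : Ω → ℝ | ∀ ω, 0 ≤ η ω} := by
        have : {η : Ω → ℝ | ∀ ω, 0 ≤ η ω} = ⋂ ω, {η : Ω → ℝ | 0 ≤ η ω} := by
          ext η; simp
        rw [this]
        exact isClosed_iInter fun ω => isClosed_le continuous_const (continuous_apply ω)
      exact h1.inter h2
    have hQPcomp : IsCompact (Qt ∩ P) := hcomp.inter_right hPclosed
    have hTcomp : IsCompact (EX '' (Qt ∩ P)) := hQPcomp.image hEXcont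
    set M := sSup (EX '' (Qt ∩ P)) with hMdef
    have hM_ub : ∀ η ∈ Qt ∩ P, EX η ≤ M :=
      fun η hη => le_csSup hTcomp.bddAbove (Set.mem_image_of_mem _ hη)
    obtain ⟨η₁, hη₁, hη₁M⟩ := hTcomp.sSup_mem hTne
    -- weak duality
    have hweak : ∀ y : ℝ,
        M ≤ y + sSup ((fun η : Ω → ℝ => EX η - y * E η) '' Qt) := by
      intro y
      refine csSup_le hTne ?_
      rintro v ⟨η, ⟨hηQ, hηP⟩, rfl⟩
      have hE1 : E η = 1 := by rw [hP] at hηP; exact hηP.1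
      have h := hle_sSup y η hηQ
      rw [hE1] at h
      linarith
    have hbddBelow : BddBelow (Set.range fun y : ℝ =>
        y + sSup ((fun η : Ω → ℝ => EX η - y * E η) '' Qt)) := by
      refine ⟨EX η₀, ?_⟩
      rintro v ⟨y, rfl⟩
      show EX η₀ ≤ y + sSup ((fun η : Ω → ℝ => EX η - y * E η) '' Qt)
      have h := hle_sSup y η₀ hη₀Q
      rw [hη₀E] at h
      linarith
    refine le_antisymm (le_ciInf hweak) ?_
    refine le_of_forall_pos_le_add ?_
    intro ε hε
    -- strong duality via separation in ℝ²
    set A2 : Set (ℝ × ℝ) := (fun η : Ω → ℝ => (E η, EX η)) '' Qt with hA2def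
    have hA2cont : Continuous (fun η : Ω → ℝ => (E η, EX η)) := hEcont.prodMk hEXcont
    have hA2comp : IsCompact A2 := hcomp.image hA2cont
    have hA2closed : IsClosed A2 := hA2comp.isClosed
    have hL : IsLinearMap ℝ (fun η : Ω → ℝ => (E η, EX η)) := by
      constructor
      · intro a b
        simp only [hEdef, hEXdef, Prod.mk_add_mk, Prod.ext_iff, Pi.add_apply]
        constructor
        · rw [← Finset.sum_add_distrib]; exact Finset.sum_congr rfl fun ω _ => by ring
        · rw [← Finset.sum_add_distrib]; exact Finset.sum_congr rfl fun ω _ => by ring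
      · intro c a
        simp only [hEdef, hEXdef, Prod.smul_mk, Prod.ext_iff, Pi.smul_apply, smul_eq_mul]
        constructor
        · rw [Finset.mul_sum]; exact Finset.sum_congr rfl fun ω _ => by ring
        · rw [Finset.mul_sum]; exact Finset.sum_congr rfl fun ω _ => by ring
    have hA2conv : Convex ℝ A2 := hconv.is_linear_image hL
    have hq : ((1 : ℝ), M + ε) ∉ A2 := by
      rintro ⟨η, hηQ, hηeq⟩
      have hE1 : E η = 1 := congrArg Prod.fst hηeq
      have hEXη : EX η = M + ε := congrArg Prod.snd hηeq
      have hηP : η ∈ P := by rw [hP]; exact ⟨hE1, hpos _ hηQ⟩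
      have := hM_ub η ⟨hηQ, hηP⟩
      rw [hEXη] at this
      linarith
    obtain ⟨l, u, hlt, hgt⟩ := geometric_hahn_banach_closed_point hA2conv hA2closed hq
    set α : ℝ := l (1, 0) with hαdef
    set β : ℝ := l (0, 1) with hβdef
    have hl : ∀ t v : ℝ, l (t, v) = t * α + v * β := by
      intro t v
      have h : (t, v) = t • ((1 : ℝ), (0 : ℝ)) + v • ((0 : ℝ), (1 : ℝ)) := by
        simp [Prod.ext_iff]
      rw [h, map_add, map_smul, map_smul, smul_eq_mul, smul_eq_mul]
    have hlt' : ∀ η ∈ Qt, E η * α + EX η * β < u := by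
      intro η hη
      have := hlt _ (Set.mem_image_of_mem _ hη)
      rwa [hl] at this
    have hgt' : u < α + (M + ε) * β := by
      rw [hl] at hgt; linarith
    -- β > 0
    have hMpt : M * β + α < u := by
      have h1 : E η₁ = 1 := by
        rcases hη₁ with ⟨_, hη₁P⟩
        rw [hP] at hη₁P; exact hη₁P.1
      have := hlt' η₁ hη₁.1
      rw [h1, hη₁M] at this
      linarith
    have hβpos : 0 < β := by nlinarith
    set y : ℝ := -(α / β) with hydef
    have hyβ : y * β = -α := by
      rw [hydef]; field_simp
    have hfy : y + sSup ((fun η : Ω → ℝ => EX η - y * E η) '' Qt) ≤ M + ε := by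
      have hsup : sSup ((fun η : Ω → ℝ => EX η - y * E η) '' Qt) ≤ u / β := by
        refine csSup_le (hSne y) ?_
        rintro v ⟨η, hηQ, rfl⟩
        rw [le_div_iff₀ hβpos]
        have h := hlt' η hηQ
        have hexp : (EX η - y * E η) * β = EX η * β - (y * β) * E η := by ring
        rw [hexp, hyβ]
        linarith
      have hcomb : -(α / β) + u / β = (u - α) / β := by ring
      have : y + u / β ≤ M + ε := by
        rw [hydef, hcomb, div_le_iff₀ hβpos]
        linarith
      exact le_trans (add_le_add_right hsup y) this
    calc (⨅ y : ℝ, (y + sSup ((fun η : Ω → ℝ => EX η - y * E η) '' Qt)))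
        ≤ y + sSup ((fun η : Ω → ℝ => EX η - y * E η) '' Qt) := ciInf_le hbddBelow y
      _ ≤ M + ε := hfy
  · -- degenerate case : Qt ∩ P = ∅ and the infimum is over an unbounded-below family
    have hQP : Qt ∩ P = ∅ := by
      rw [Set.eq_empty_iff_forall_notMem]
      rintro η ⟨hηQ, hηP⟩
      rw [hP] at hηP
      exact hex ⟨η, hηQ, hηP.1⟩
    rw [hQP, Set.image_empty, Real.sSup_empty]
    -- dichotomy
    have hdich : (∀ η ∈ Qt, E η < 1) ∨ (∀ η ∈ Qt, 1 < E η) := by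
      by_contra h
      push_neg at h
      obtain ⟨⟨η₁, h₁Q, h₁⟩, ⟨η₂, h₂Q, h₂⟩⟩ := h
      have hconvE : Convex ℝ (E '' Qt) := hconv.is_linear_image (by
        constructor
        · intro a b
          simp only [hEdef, Pi.add_apply]
          rw [← Finset.sum_add_distrib]; exact Finset.sum_congr rfl fun ω _ => by ring
        · intro c a
          simp only [hEdef, Pi.smul_apply, smul_eq_mul]
          rw [Finset.mul_sum]; exact Finset.sum_congr rfl fun ω _ => by ring)
      have h1mem : (1 : ℝ) ∈ E '' Qt :=
        hconvE.ordConnected.out ⟨η₂, h₂Q, rfl⟩ ⟨η₁, h₁Q, rfl⟩ ⟨h₂, h₁⟩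
      obtain ⟨η, hηQ, hηE⟩ := h1mem
      exact hex ⟨η, hηQ, hηE⟩
    set C := sSup (EX '' Qt) with hCdef
    have hC : ∀ η ∈ Qt, EX η ≤ C :=
      fun η hη => le_csSup (hcomp.image hEXcont).bddAbove (Set.mem_image_of_mem _ hη)
    have hEcompact : IsCompact (E '' Qt) := hcomp.image hEcont
    have hnotbdd : ¬ BddBelow (Set.range fun y : ℝ =>
        y + sSup ((fun η : Ω → ℝ => EX η - y * E η) '' Qt)) := by
      rintro ⟨m, hm⟩
      rcases hdich with hlt1 | hgt1
      · -- all expectations < 1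
        set b := sSup (E '' Qt) with hbdef
        obtain ⟨ηb, hηbQ, hηbE⟩ := hEcompact.sSup_mem (hne.image _)
        have hb1 : b < 1 := by rw [hbdef, ← hηbE]; exact hlt1 _ hηbQ
        have hbub : ∀ η ∈ Qt, E η ≤ b :=
          fun η hη => le_csSup hEcompact.bddAbove (Set.mem_image_of_mem _ hη)
        set y : ℝ := min ((m - C - 1) / (1 - b)) 0 with hydef
        have hy0 : y ≤ 0 := min_le_right _ _
        have hy1 : y ≤ (m - C - 1) / (1 - b) := min_le_left _ _
        have hsup : sSup ((fun η : Ω → ℝ => EX η - y * E η) '' Qt) ≤ C - y * b := by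
          refine csSup_le (hSne y) ?_
          rintro v ⟨η, hηQ, rfl⟩
          show EX η - y * E η ≤ C - y * b
          have h1 := hC η hηQ
          have h2 := hbub η hηQ
          nlinarith
        have hyb : y * (1 - b) ≤ m - C - 1 :=
          (le_div_iff₀ (by linarith)).mp hy1
        have hfm : y + sSup ((fun η : Ω → ℝ => EX η - y * E η) '' Qt) ≤ m - 1 := by
          nlinarith
        have hmy : m ≤ y + sSup ((fun η : Ω → ℝ => EX η - y * E η) '' Qt) := hm ⟨y, rfl⟩
        linarith
      · -- all expectations > 1
        set a := sInf (E '' Qt) with hadef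
        obtain ⟨ηa, hηaQ, hηaE⟩ := hEcompact.sInf_mem (hne.image _)
        have ha1 : 1 < a := by rw [hadef, ← hηaE]; exact hgt1 _ hηaQ
        have halb : ∀ η ∈ Qt, a ≤ E η :=
          fun η hη => csInf_le hEcompact.bddBelow (Set.mem_image_of_mem _ hη)
        set y : ℝ := max ((m - C - 1) / (1 - a)) 0 with hydef
        have hy0 : 0 ≤ y := le_max_right _ _
        have hy1 : (m - C - 1) / (1 - a) ≤ y := le_max_left _ _
        have hsup : sSup ((fun η : Ω → ℝ => EX η - y * E η) '' Qt) ≤ C - y * a := by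
          refine csSup_le (hSne y) ?_
          rintro v ⟨η, hηQ, rfl⟩
          show EX η - y * E η ≤ C - y * a
          have h1 := hC η hηQ
          have h2 := halb η hηQ
          nlinarith
        have hya : y * (1 - a) ≤ m - C - 1 :=
          (div_le_iff_of_neg (by linarith)).mp hy1
        have hfm : y + sSup ((fun η : Ω → ℝ => EX η - y * E η) '' Qt) ≤ m - 1 := by
          nlinarith
        have hmy : m ≤ y + sSup ((fun η : Ω → ℝ => EX η - y * E η) '' Qt) := hm ⟨y, rfl⟩
        linarith
    rw [Real.iInf_of_not_bddBelow hnotbdd]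
end

section
/- Let R be a coherent risk measure with dual representation R(X) = sup over η ∈ Q of E(Xη) with Q ⊂ P nonempty closed convex, and let V be a coherent regret measure with dual representation V(X) = sup over η ∈ Q̃ of E(Xη) with Q̃ compact convex. Then R(X) = inf over y of { y + V(X − y) } for all X ∈ L² if and only if Q = Q̃ ∩ P, where P = { η : E(η)=1, η ≥ 0 }. -/
open Finset

variable {Ω : Type} [Fintype Ω]

private lemma cont_sum (c : Ω → ℝ) : Continuous (fun η : Ω → ℝ => ∑ ω, c ω * η ω) :=
  continuous_finset_sum _ fun ω _ => continuous_const.mul (continuous_apply ω)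

private lemma cont_sum' (p X : Ω → ℝ) :
    Continuous (fun η : Ω → ℝ => ∑ ω, p ω * (X ω * η ω)) := by
  have := cont_sum (fun ω => p ω * X ω)
  simpa [mul_assoc] using this

private lemma sum_shift (p X η : Ω → ℝ) (y : ℝ) :
    ∑ ω, p ω * ((X ω - y) * η ω)
      = (∑ ω, p ω * (X ω * η ω)) - y * ∑ ω, p ω * η ω := by
  rw [Finset.mul_sum, ← Finset.sum_sub_distrib]
  exact Finset.sum_congr rfl fun ω _ => by ring

private lemma clm_eq_sum [DecidableEq Ω] (f : (Ω → ℝ) →L[ℝ] ℝ) (η : Ω → ℝ) :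
    f η = ∑ ω, f (Pi.single ω 1) * η ω := by
  conv_lhs => rw [← Finset.univ_sum_single η]
  rw [map_sum]
  refine Finset.sum_congr rfl fun ω _ => ?_
  have h : Pi.single ω (η ω) = η ω • (Pi.single ω 1 : Ω → ℝ) := by
    ext j; by_cases hj : j = ω <;> simp [Pi.single_apply, hj]
  rw [h, map_smul, smul_eq_mul, mul_comm]

private lemma e_lin (p : Ω → ℝ) (a b : Ω → ℝ) (s t : ℝ) :
    (∑ ω, p ω * (s • a + t • b) ω) = s * ∑ ω, p ω * a ω + t * ∑ ω, p ω * b ω := by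
  rw [Finset.mul_sum, Finset.mul_sum, ← Finset.sum_add_distrib]
  exact Finset.sum_congr rfl fun ω _ => by simp [Pi.add_apply]; ring

private lemma key_lemma (p : Ω → ℝ) (X : Ω → ℝ) (Qt : Set (Ω → ℝ))
    (hcomp : IsCompact Qt) (hconv : Convex ℝ Qt)
    (hTne : (Qt ∩ {η | ∑ ω, p ω * η ω = 1}).Nonempty) :
    (⨅ y : ℝ, (y + sSup ((fun η : Ω → ℝ => ∑ ω, p ω * ((X ω - y) * η ω)) '' Qt)))
      = sSup ((fun η : Ω → ℝ => ∑ ω, p ω * (X ω * η ω)) ''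
          (Qt ∩ {η | ∑ ω, p ω * η ω = 1})) := by
  classical
  set A : (Ω → ℝ) → ℝ := fun η => ∑ ω, p ω * (X ω * η ω) with hAdef
  set e : (Ω → ℝ) → ℝ := fun η => ∑ ω, p ω * η ω with hedef
  set T : Set (Ω → ℝ) := Qt ∩ {η | e η = 1} with hTdef
  obtain ⟨η₁, hη₁Qt, hη₁e⟩ := hTne
  have hQtne : Qt.Nonempty := ⟨η₁, hη₁Qt⟩
  have hAcont : Continuous A := cont_sum' p X
  have hecont : Continuous e := cont_sum p
  have hTcomp : IsCompact T := hcomp.inter_right (isClosed_eq hecont continuous_const)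
  have hTne' : T.Nonempty := ⟨η₁, hη₁Qt, hη₁e⟩
  have hTimg : IsCompact (A '' T) := hTcomp.image hAcont
  have hTbdd : BddAbove (A '' T) := hTimg.bddAbove
  set M : ℝ := sSup (A '' T) with hMdef
  have hfun : ∀ y : ℝ, (fun η : Ω → ℝ => ∑ ω, p ω * ((X ω - y) * η ω))
      = fun η => A η - y * e η := fun y => funext fun η => sum_shift p X η y
  simp only [hfun]
  set f : ℝ → ℝ := fun y => y + sSup ((fun η => A η - y * e η) '' Qt) with hfdef
  have hlb : ∀ y : ℝ, M ≤ f y := by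
    intro y
    refine csSup_le (hTne'.image _) ?_
    rintro _ ⟨η, ⟨hηQt, hηe⟩, rfl⟩
    have hmem : A η - y * e η ∈ (fun η => A η - y * e η) '' Qt := ⟨η, hηQt, rfl⟩
    have hbd : BddAbove ((fun η => A η - y * e η) '' Qt) :=
      (hcomp.image (hAcont.sub (continuous_const.mul hecont))).bddAbove
    have := le_csSup hbd hmem
    have hηe' : e η = 1 := hηe
    simp only [hfdef]
    rw [hηe'] at this
    linarith
  refine le_antisymm ?_ (le_ciInf hlb)
  refine le_of_forall_pos_le_add ?_
  intro ε hε
  suffices h : ∃ y : ℝ, f y ≤ M + ε by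
    obtain ⟨y, hy⟩ := h
    exact ciInf_le_of_le ⟨M, by rintro _ ⟨y', rfl⟩; exact hlb y'⟩ y hy
  set Φ : (Ω → ℝ) →ₗ[ℝ] ℝ × ℝ :=
    { toFun := fun η => (e η, A η)
      map_add' := by
        intro a b
        have h1 : e (a + b) = e a + e b := by
          simp only [hedef, Pi.add_apply, mul_add]
          exact Finset.sum_add_distrib
        have h2 : A (a + b) = A a + A b := by
          simp only [hAdef, Pi.add_apply, mul_add, Finset.sum_add_distrib]
        simp [h1, h2, Prod.ext_iff]
      map_smul' := by
        intro c a
        have h1 : e (c • a) = c * e a := by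
          simp only [hedef, Pi.smul_apply, smul_eq_mul, Finset.mul_sum]
          exact Finset.sum_congr rfl fun ω _ => by ring
        have h2 : A (c • a) = c * A a := by
          simp only [hAdef, Pi.smul_apply, smul_eq_mul, Finset.mul_sum]
          exact Finset.sum_congr rfl fun ω _ => by ring
        simp [h1, h2, Prod.ext_iff] } with hΦdef
  have hΦcont : Continuous Φ := by
    show Continuous fun η => (e η, A η)
    exact hecont.prodMk hAcont
  set K : Set (ℝ × ℝ) := Φ '' Qt with hKdef
  have hKcomp : IsCompact K := hcomp.image hΦcont
  have hKconv : Convex ℝ K := hconv.linear_image Φ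
  have hpt : ((1 : ℝ), M + ε) ∉ K := by
    rintro ⟨η, hηQt, hΦη⟩
    have h1 : e η = 1 := congrArg Prod.fst hΦη
    have h2 : A η = M + ε := congrArg Prod.snd hΦη
    have : A η ≤ M := le_csSup hTbdd ⟨η, ⟨hηQt, h1⟩, rfl⟩
    linarith
  obtain ⟨g, u, hgK, hgu⟩ :=
    geometric_hahn_banach_closed_point hKconv hKcomp.isClosed hpt
  set α : ℝ := g (1, 0) with hα
  set β : ℝ := g (0, 1) with hβ
  have hdecomp : ∀ z : ℝ × ℝ, g z = z.1 * α + z.2 * β := by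
    intro z
    have hz : z = z.1 • ((1:ℝ), (0:ℝ)) + z.2 • ((0:ℝ), (1:ℝ)) := by
      ext <;> simp
    conv_lhs => rw [hz]
    rw [map_add, map_smul, map_smul, smul_eq_mul, smul_eq_mul]
  have hgQt : ∀ η ∈ Qt, e η * α + A η * β < u := by
    intro η hη
    have := hgK _ ⟨η, hη, rfl⟩
    rwa [hdecomp] at this
  have hu : u < α + (M + ε) * β := by
    have := hgu
    rw [hdecomp] at this
    simpa using this
  have hAη₁ : A η₁ ≤ M := le_csSup hTbdd ⟨η₁, ⟨hη₁Qt, hη₁e⟩, rfl⟩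
  have hη₁' := hgQt η₁ hη₁Qt
  rw [show e η₁ = 1 from hη₁e] at hη₁'
  rcases lt_trichotomy β 0 with hβneg | hβ0 | hβpos
  · exfalso; nlinarith
  · exfalso; rw [hβ0] at hη₁' hu; simp at hη₁' hu; linarith
  · refine ⟨-(α / β), ?_⟩
    have hkey : ∀ η ∈ Qt, A η + (-(α / β)) * (1 - e η) ≤ M + ε := by
      intro η hη
      have hyβ : (-(α / β)) * β = -α := by field_simp
      have expand : (A η + (-(α / β)) * (1 - e η)) * β
          = A η * β - α * (1 - e η) := by linear_combination (1 - e η) * hyβ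
      have h1 := hgQt η hη
      have h2 : (A η + (-(α / β)) * (1 - e η)) * β ≤ (M + ε) * β := by
        rw [expand]; nlinarith
      exact le_of_mul_le_mul_right h2 hβpos
    simp only [hfdef]
    have hsup : sSup ((fun η => A η - (-(α / β)) * e η) '' Qt)
        ≤ M + ε - (-(α / β)) := by
      refine csSup_le (hQtne.image _) ?_
      rintro _ ⟨η, hη, rfl⟩
      have := hkey η hη
      linarith [this]
    linarith

private lemma sub_lemma (p : Ω → ℝ) (hp : ∀ ω, 0 < p ω) (A B : Set (Ω → ℝ))
    (hAcomp : IsCompact A) (hBclosed : IsClosed B) (hBconv : Convex ℝ B)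
    (hBne : B.Nonempty)
    (h : ∀ X : Ω → ℝ, sSup ((fun η : Ω → ℝ => ∑ ω, p ω * (X ω * η ω)) '' A)
        ≤ sSup ((fun η : Ω → ℝ => ∑ ω, p ω * (X ω * η ω)) '' B)) : A ⊆ B := by
  classical
  intro x hx
  by_contra hxB
  obtain ⟨f, u, hfu, hux⟩ := geometric_hahn_banach_closed_point hBconv hBclosed hxB
  set X : Ω → ℝ := fun ω => f (Pi.single ω 1) / p ω with hXdef
  have hFX : ∀ η : Ω → ℝ, (∑ ω, p ω * (X ω * η ω)) = f η := by
    intro η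
    rw [clm_eq_sum f η]
    refine Finset.sum_congr rfl fun ω _ => ?_
    simp only [hXdef]
    field_simp [(hp ω).ne']
  have h1 : f x ≤ sSup ((fun η : Ω → ℝ => ∑ ω, p ω * (X ω * η ω)) '' A) := by
    refine le_csSup ((hAcomp.image (cont_sum' p X)).bddAbove) ?_
    exact ⟨x, hx, hFX x⟩
  have h2 : sSup ((fun η : Ω → ℝ => ∑ ω, p ω * (X ω * η ω)) '' B) ≤ u := by
    refine csSup_le (hBne.image _) ?_
    rintro _ ⟨η, hη, rfl⟩
    simpa only [hFX η] using (hfu η hη).le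
  linarith [h X]

private lemma not_bddBelow_aux (f : ℝ → ℝ) (m : ℝ) (hm : m < 1)
    (hf : ∀ y : ℝ, y ≤ 0 → f y ≤ m + y * (1 - m)) : ¬ BddBelow (Set.range f) := by
  rintro ⟨b, hb⟩
  set y := min 0 ((b - m) / (1 - m) - 1) with hy
  have hy0 : y ≤ 0 := min_le_left _ _
  have h1m : (0:ℝ) < 1 - m := by linarith
  have hy2 : y < (b - m) / (1 - m) := lt_of_le_of_lt (min_le_right _ _) (by linarith)
  have h3 : y * (1 - m) < b - m := (lt_div_iff₀ h1m).mp hy2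
  have h4 : b ≤ f y := hb ⟨y, rfl⟩
  have := hf y hy0
  linarith

private lemma not_bddBelow_aux' (f : ℝ → ℝ) (m : ℝ) (hm : 1 < m)
    (hf : ∀ y : ℝ, 1 ≤ y → f y ≤ m + y * (1 - m)) : ¬ BddBelow (Set.range f) := by
  rintro ⟨b, hb⟩
  set y := max 1 ((b - m) / (1 - m) + 1) with hy
  have hy1 : (1:ℝ) ≤ y := le_max_left _ _
  have h1m : 1 - m < 0 := by linarith
  have hy2 : (b - m) / (1 - m) < y := lt_of_lt_of_le (by linarith) (le_max_right _ _)
  have h3 : y * (1 - m) < b - m := (div_lt_iff_of_neg h1m).mp hy2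
  have h4 : b ≤ f y := hb ⟨y, rfl⟩
  have := hf y hy1
  linarith

/-- `R(X) = inf_y { y + V(X - y) }` holds for all `X` iff the risk envelope is
`Q = Q̃ ∩ P`. -/
theorem stmt4 {Ω : Type} [Fintype Ω] (p : Ω → ℝ) (hp : ∀ ω, 0 < p ω)
    (hsum : ∑ ω, p ω = 1)
    (P : Set (Ω → ℝ))
    (hP : P = {η | (∑ ω, p ω * η ω) = 1 ∧ ∀ ω, 0 ≤ η ω})
    (Q : Set (Ω → ℝ)) (hQne : Q.Nonempty) (hQclosed : IsClosed Q)
    (hQconv : Convex ℝ Q) (hQP : Q ⊆ P)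
    (Qt : Set (Ω → ℝ)) (hQtne : Qt.Nonempty) (hQtcomp : IsCompact Qt)
    (hQtconv : Convex ℝ Qt) (hQtpos : ∀ η ∈ Qt, ∀ ω, 0 ≤ η ω)
    (R V : (Ω → ℝ) → ℝ)
    (hR : ∀ X : Ω → ℝ, R X = sSup ((fun η : Ω → ℝ => ∑ ω, p ω * (X ω * η ω)) '' Q))
    (hV : ∀ X : Ω → ℝ, V X = sSup ((fun η : Ω → ℝ => ∑ ω, p ω * (X ω * η ω)) '' Qt)) :
    (∀ X : Ω → ℝ, R X = ⨅ y : ℝ, (y + V (fun ω => X ω - y))) ↔ Q = Qt ∩ P := by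
  classical
  have hecont : Continuous (fun η : Ω → ℝ => ∑ ω, p ω * η ω) := cont_sum p
  have hTQtP : Qt ∩ P = Qt ∩ {η | (∑ ω, p ω * η ω) = 1} := by
    ext η
    simp only [hP, Set.mem_inter_iff, Set.mem_setOf_eq]
    exact ⟨fun ⟨h1, h2, _⟩ => ⟨h1, h2⟩, fun ⟨h1, h2⟩ => ⟨h1, h2, hQtpos η h1⟩⟩
  -- compactness of P, Q, T
  have hPclosed : IsClosed P := by
    have : P = {η : Ω → ℝ | (∑ ω, p ω * η ω) = 1} ∩ ⋂ ω, {η : Ω → ℝ | 0 ≤ η ω} := by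
      rw [hP]; ext η; simp [Set.mem_iInter]
    rw [this]
    exact (isClosed_eq hecont continuous_const).inter
      (isClosed_iInter fun ω => isClosed_le continuous_const (continuous_apply ω))
  have hPsub : P ⊆ Set.univ.pi (fun ω => Set.Icc (0:ℝ) (1 / p ω)) := by
    rw [hP]; rintro η ⟨h1, h2⟩ ω _
    refine ⟨h2 ω, ?_⟩
    rw [le_div_iff₀ (hp ω)]
    calc η ω * p ω = p ω * η ω := mul_comm _ _
      _ ≤ ∑ ω', p ω' * η ω' :=
          Finset.single_le_sum (fun i _ => mul_nonneg (hp i).le (h2 i)) (Finset.mem_univ ω)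
      _ = 1 := h1
  have hPcomp : IsCompact P :=
    IsCompact.of_isClosed_subset (isCompact_univ_pi fun ω => isCompact_Icc) hPclosed hPsub
  have hQcomp : IsCompact Q := IsCompact.of_isClosed_subset hPcomp hQclosed hQP
  have hTcomp : IsCompact (Qt ∩ {η | (∑ ω, p ω * η ω) = 1}) :=
    hQtcomp.inter_right (isClosed_eq hecont continuous_const)
  have hTconv : Convex ℝ (Qt ∩ {η | (∑ ω, p ω * η ω) = 1}) := by
    refine hQtconv.inter ?_
    intro a ha b hb s t hs ht hst
    simp only [Set.mem_setOf_eq] at ha hb ⊢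
    rw [e_lin p a b s t, ha, hb]
    linarith
  have heQ : ∀ η ∈ Q, (∑ ω, p ω * η ω) = 1 := by
    intro η hη
    have := hQP hη
    rw [hP] at this
    exact this.1
  have h1R : R (fun _ => (1:ℝ)) = 1 := by
    rw [hR]
    have himg : (fun η : Ω → ℝ => ∑ ω, p ω * ((1:ℝ) * η ω)) '' Q = {1} := by
      ext r
      constructor
      · rintro ⟨η, hη, rfl⟩
        simp only [one_mul, Set.mem_singleton_iff]
        exact heQ η hη
      · rintro hr
        obtain ⟨q₀, hq₀⟩ := hQne
        rw [Set.mem_singleton_iff] at hr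
        exact ⟨q₀, hq₀, by simp only [one_mul]; rw [heQ q₀ hq₀, hr]⟩
    rw [himg, csSup_singleton]
  constructor
  · intro H
    -- Step 1 : T is nonempty
    have hTne : (Qt ∩ {η | (∑ ω, p ω * η ω) = 1}).Nonempty := by
      by_contra hemp
      rw [Set.not_nonempty_iff_eq_empty] at hemp
      have hne1 : ∀ η ∈ Qt, (∑ ω, p ω * η ω) ≠ 1 := fun η hη h1 =>
        Set.eq_empty_iff_forall_notMem.mp hemp η ⟨hη, h1⟩
      have hcases : (∀ η ∈ Qt, (∑ ω, p ω * η ω) < 1) ∨ (∀ η ∈ Qt, 1 < ∑ ω, p ω * η ω) := by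
        by_contra hc
        push_neg at hc
        obtain ⟨⟨η₂, hη₂, h2⟩, ⟨η₃, hη₃, h3⟩⟩ := hc
        have h2' : 1 < ∑ ω, p ω * η₂ ω := lt_of_le_of_ne h2 (Ne.symm (hne1 η₂ hη₂))
        have h3' : (∑ ω, p ω * η₃ ω) < 1 := lt_of_le_of_ne h3 (hne1 η₃ hη₃)
        set e2 := ∑ ω, p ω * η₂ ω
        set e3 := ∑ ω, p ω * η₃ ω
        have hd : (0:ℝ) < e2 - e3 := by linarith
        set t := (1 - e3) / (e2 - e3) with htdef
        have ht0 : 0 ≤ t := div_nonneg (by linarith) hd.le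
        have ht1 : t ≤ 1 := by
          rw [div_le_one hd]; linarith
        have hmem : (1 - t) • η₃ + t • η₂ ∈ Qt :=
          hQtconv hη₃ hη₂ (by linarith) ht0 (by ring)
        have hval : (∑ ω, p ω * ((1 - t) • η₃ + t • η₂) ω) = 1 := by
          rw [e_lin p η₃ η₂ (1 - t) t]
          have htd : t * (e2 - e3) = 1 - e3 := by
            rw [htdef]; field_simp
          linear_combination htd
        exact hne1 _ hmem hval
      have h := H (fun _ => (1:ℝ))
      rw [h1R] at h
      simp only [hV] at h
      have hval : ∀ (y : ℝ) (η : Ω → ℝ),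
          (∑ ω, p ω * ((1 - y) * η ω)) = (1 - y) * ∑ ω, p ω * η ω := by
        intro y η
        rw [Finset.mul_sum]
        exact Finset.sum_congr rfl fun ω _ => by ring
      rcases hcases with hlt | hgt
      · set m := sSup ((fun η : Ω → ℝ => ∑ ω, p ω * η ω) '' Qt) with hm
        have hmem := (hQtcomp.image hecont).sSup_mem (hQtne.image _)
        obtain ⟨ηm, hηm, hmeq⟩ := hmem
        have hmeq' : (∑ ω, p ω * ηm ω) = m := by simpa using hmeq.trans hm.symm
        have hm1 : m < 1 := hmeq' ▸ hlt ηm hηm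
        have hub : ∀ η ∈ Qt, (∑ ω, p ω * η ω) ≤ m := fun η hη =>
          le_csSup (hQtcomp.image hecont).bddAbove ⟨η, hη, rfl⟩
        have hnb := not_bddBelow_aux
          (fun y : ℝ => y + sSup ((fun η : Ω → ℝ => ∑ ω, p ω * ((1 - y) * η ω)) '' Qt))
          m hm1 ?_
        · rw [Real.iInf_of_not_bddBelow hnb] at h
          exact one_ne_zero h
        · intro y hy
          have hsup : sSup ((fun η : Ω → ℝ => ∑ ω, p ω * ((1 - y) * η ω)) '' Qt)
              ≤ (1 - y) * m := by
            refine csSup_le (hQtne.image _) ?_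
            rintro _ ⟨η, hη, rfl⟩
            simpa only [hval y η] using
              mul_le_mul_of_nonneg_left (hub η hη) (by linarith : (0:ℝ) ≤ 1 - y)
          have : y + (1 - y) * m = m + y * (1 - m) := by ring
          linarith
      · set m := sInf ((fun η : Ω → ℝ => ∑ ω, p ω * η ω) '' Qt) with hm
        have hmem := (hQtcomp.image hecont).sInf_mem (hQtne.image _)
        obtain ⟨ηm, hηm, hmeq⟩ := hmem
        have hmeq' : (∑ ω, p ω * ηm ω) = m := by simpa using hmeq.trans hm.symm
        have hm1 : 1 < m := hmeq' ▸ hgt ηm hηm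
        have hlbm : ∀ η ∈ Qt, m ≤ ∑ ω, p ω * η ω := fun η hη =>
          csInf_le (hQtcomp.image hecont).bddBelow ⟨η, hη, rfl⟩
        have hnb := not_bddBelow_aux'
          (fun y : ℝ => y + sSup ((fun η : Ω → ℝ => ∑ ω, p ω * ((1 - y) * η ω)) '' Qt))
          m hm1 ?_
        · rw [Real.iInf_of_not_bddBelow hnb] at h
          exact one_ne_zero h
        · intro y hy
          have hsup : sSup ((fun η : Ω → ℝ => ∑ ω, p ω * ((1 - y) * η ω)) '' Qt)
              ≤ (1 - y) * m := by
            refine csSup_le (hQtne.image _) ?_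
            rintro _ ⟨η, hη, rfl⟩
            simpa only [hval y η] using
              mul_le_mul_of_nonpos_left (hlbm η hη) (by linarith : (1:ℝ) - y ≤ 0)
          have : y + (1 - y) * m = m + y * (1 - m) := by ring
          linarith
    -- Step 2 : equal support functions
    have hsups : ∀ X : Ω → ℝ,
        sSup ((fun η : Ω → ℝ => ∑ ω, p ω * (X ω * η ω)) '' Q)
          = sSup ((fun η : Ω → ℝ => ∑ ω, p ω * (X ω * η ω)) ''
              (Qt ∩ {η | (∑ ω, p ω * η ω) = 1})) := by
      intro X
      have h := H X
      rw [hR] at h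
      simp only [hV] at h
      rw [h]
      exact key_lemma p X Qt hQtcomp hQtconv hTne
    have hQT : Q = Qt ∩ {η | (∑ ω, p ω * η ω) = 1} :=
      Set.Subset.antisymm
        (sub_lemma p hp Q _ hQcomp hTcomp.isClosed hTconv hTne
          (fun X => le_of_eq (hsups X)))
        (sub_lemma p hp _ Q hTcomp hQclosed hQconv hQne
          (fun X => ge_of_eq (hsups X)))
    rw [hQT, hTQtP]
  · intro hQeq X
    have hTne : (Qt ∩ {η | (∑ ω, p ω * η ω) = 1}).Nonempty := by
      rw [← hTQtP, ← hQeq]; exact hQne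
    rw [hR]
    simp only [hV]
    rw [key_lemma p X Qt hQtcomp hQtconv hTne, hQeq, hTQtP]
end

section
/- For 0 ≤ α < 1 and X ∈ L² on a finite probability space, sup over η with 0 ≤ η ≤ 1/(1−α) and E(η)=1 of E(Xη) equals min over y ∈ ℝ of { y + (1/(1−α))·E((X − y)₊) } (the CVaR minimization formula), and the minimum is attained. -/
set_option maxHeartbeats 1000000

/-- The CVaR minimization formula: the dual-representation value of `CVaR_α`
is the (attained) minimum of `y + (1/(1-α)) E((X-y)₊)`. -/

theorem stmt6 {Ω : Type} [Fintype Ω] (p : Ω → ℝ) (hp : ∀ ω, 0 < p ω)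
    (hsum : ∑ ω, p ω = 1) (α : ℝ) (hα0 : 0 ≤ α) (hα1 : α < 1) (X : Ω → ℝ) :
    IsLeast
      (Set.range fun y : ℝ => y + (1 / (1 - α)) * ∑ ω, p ω * max (X ω - y) 0)
      (sSup ((fun η : Ω → ℝ => ∑ ω, p ω * (X ω * η ω)) ''
        {η | (∀ ω, 0 ≤ η ω ∧ η ω ≤ 1 / (1 - α)) ∧ (∑ ω, p ω * η ω) = 1})) := by
  classical
  have h1α : 0 < 1 - α := by linarith
  set c := 1 / (1 - α) with hc
  have hc0 : 0 < c := by positivity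
  have hc1 : 1 ≤ c := by rw [hc, le_div_iff₀ h1α]; linarith
  have hcα : c * (1 - α) = 1 := by rw [hc]; field_simp
  set g := fun y : ℝ => y + c * ∑ ω, p ω * max (X ω - y) 0 with hg
  set S := ((fun η : Ω → ℝ => ∑ ω, p ω * (X ω * η ω)) ''
        {η | (∀ ω, 0 ≤ η ω ∧ η ω ≤ c) ∧ (∑ ω, p ω * η ω) = 1}) with hS
  -- nonempty Ω
  have hΩ : Nonempty Ω := by
    by_contra h
    rw [not_nonempty_iff] at h
    rw [Finset.univ_eq_empty, Finset.sum_empty] at hsum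
    norm_num at hsum
  -- upper bound: every element of S is ≤ g y for every y
  have hub : ∀ y : ℝ, ∀ s ∈ S, s ≤ g y := by
    rintro y s ⟨η, ⟨hηb, hηe⟩, rfl⟩
    have key : ∀ ω, p ω * (X ω * η ω) ≤ p ω * (c * max (X ω - y) 0) + y * (p ω * η ω) := by
      intro ω
      have hpω := (hp ω).le
      have h0 := (hηb ω).1
      have h2 := (hηb ω).2
      have h1 : (X ω - y) * η ω ≤ c * max (X ω - y) 0 := by
        rcases le_or_gt (X ω) y with h | h
        · have hle : (X ω - y) * η ω ≤ 0 :=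
            mul_nonpos_of_nonpos_of_nonneg (by linarith) h0
          have : 0 ≤ c * max (X ω - y) 0 := by positivity
          linarith
        · have hmax : max (X ω - y) 0 = X ω - y := max_eq_left (by linarith)
          rw [hmax]
          nlinarith
      nlinarith
    calc ∑ ω, p ω * (X ω * η ω)
        ≤ ∑ ω, (p ω * (c * max (X ω - y) 0) + y * (p ω * η ω)) :=
          Finset.sum_le_sum fun ω _ => key ω
      _ = c * (∑ ω, p ω * max (X ω - y) 0) + y * ∑ ω, p ω * η ω := by
          rw [Finset.sum_add_distrib, ← Finset.mul_sum, Finset.mul_sum, Finset.mul_sum]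
          congr 1
          apply Finset.sum_congr rfl
          intro ω _; ring
      _ = g y := by rw [hηe, hg]; ring
  -- quantile construction
  set A : ℝ → ℝ := fun y => ∑ ω ∈ Finset.univ.filter (fun ω => y < X ω), p ω with hA
  have hApos : ∀ y, 0 ≤ A y := fun y => Finset.sum_nonneg fun ω _ => (hp ω).le
  set V : Finset ℝ := Finset.image X Finset.univ with hV
  have hVne : V.Nonempty := ⟨X (Classical.arbitrary Ω), Finset.mem_image_of_mem X (Finset.mem_univ _)⟩
  have hAmax : A (V.max' hVne) = 0 := by
    have hemp : Finset.univ.filter (fun ω => V.max' hVne < X ω) = ∅ := by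
      apply Finset.filter_false_of_mem
      intro ω _
      exact not_lt.2 (Finset.le_max' V (X ω) (Finset.mem_image_of_mem X (Finset.mem_univ _)))
    show ∑ ω ∈ Finset.univ.filter (fun ω => V.max' hVne < X ω), p ω = 0
    rw [hemp, Finset.sum_empty]
  have hvmax : V.max' hVne ∈ V.filter (fun v => A v ≤ 1 - α) :=
    Finset.mem_filter.2 ⟨V.max'_mem hVne, by rw [hAmax]; linarith⟩
  set ystar := (V.filter (fun v => A v ≤ 1 - α)).min' ⟨_, hvmax⟩ with hystar
  have hymem : ystar ∈ V.filter (fun v => A v ≤ 1 - α) := Finset.min'_mem _ _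
  have hyV : ystar ∈ V := (Finset.mem_filter.1 hymem).1
  have hAy : A ystar ≤ 1 - α := (Finset.mem_filter.1 hymem).2
  -- B := P(X ≥ ystar)
  set B : ℝ := ∑ ω ∈ Finset.univ.filter (fun ω => ystar ≤ X ω), p ω with hBdef
  have hB : 1 - α ≤ B := by
    by_cases hlt : ∃ v ∈ V, v < ystar
    · obtain ⟨v0, hv0V, hv0⟩ := hlt
      have hWne : (V.filter (fun v => v < ystar)).Nonempty :=
        ⟨v0, Finset.mem_filter.2 ⟨hv0V, hv0⟩⟩
      set v' := (V.filter (fun v => v < ystar)).max' hWne with hv'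
      have hv'mem := (V.filter (fun v => v < ystar)).max'_mem hWne
      have hv'V : v' ∈ V := (Finset.mem_filter.1 hv'mem).1
      have hv'lt : v' < ystar := (Finset.mem_filter.1 hv'mem).2
      have hv'not : ¬ (A v' ≤ 1 - α) := by
        intro hcon
        have : ystar ≤ v' := Finset.min'_le (V.filter (fun v => A v ≤ 1 - α)) v' (Finset.mem_filter.2 ⟨hv'V, hcon⟩)
        linarith
      have hBA : B = A v' := by
        rw [hBdef, hA]
        apply Finset.sum_congr _ (fun _ _ => rfl)
        apply Finset.filter_congr
        intro ω _
        constructor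
        · intro h; linarith
        · intro h
          by_contra hcon
          push_neg at hcon
          have hXV : X ω ∈ V.filter (fun v => v < ystar) :=
            Finset.mem_filter.2 ⟨Finset.mem_image_of_mem X (Finset.mem_univ _), hcon⟩
          have := Finset.le_max' _ (X ω) hXV
          rw [← hv'] at this
          linarith
      rw [hBA]
      linarith [not_le.1 hv'not]
    · push_neg at hlt
      have : Finset.univ.filter (fun ω => ystar ≤ X ω) = Finset.univ := by
        apply Finset.filter_true_of_mem
        intro ω _
        exact hlt (X ω) (Finset.mem_image_of_mem X (Finset.mem_univ _))
      rw [hBdef, this, hsum]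
      linarith
  -- q := P(X = ystar)
  set q : ℝ := ∑ ω ∈ Finset.univ.filter (fun ω => X ω = ystar), p ω with hq
  have hqpos : 0 < q := by
    obtain ⟨ω0, _, hω0⟩ := Finset.mem_image.1 hyV
    apply Finset.sum_pos (fun ω _ => hp ω)
    exact ⟨ω0, Finset.mem_filter.2 ⟨Finset.mem_univ _, hω0⟩⟩
  -- B = A ystar + q
  have hBsplit : B = A ystar + q := by
    rw [hBdef, hA, hq]
    rw [← Finset.sum_union]
    · apply Finset.sum_congr _ (fun _ _ => rfl)
      ext ω
      simp only [Finset.mem_filter, Finset.mem_union, Finset.mem_univ, true_and]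
      constructor
      · intro h
        rcases lt_or_eq_of_le h with h | h
        · exact Or.inl h
        · exact Or.inr h.symm
      · rintro (h | h)
        · linarith
        · exact le_of_eq h.symm
    · rw [Finset.disjoint_filter]
      intro ω _ h h'
      rw [h'] at h
      exact lt_irrefl _ h
  set lam : ℝ := (1 - c * A ystar) / q with hlam
  have hlam0 : 0 ≤ lam := by
    apply div_nonneg _ hqpos.le
    nlinarith [hApos ystar]
  have hlamc : lam ≤ c := by
    rw [hlam, div_le_iff₀ hqpos]
    nlinarith
  set η : Ω → ℝ := fun ω => if ystar < X ω then c else if X ω = ystar then lam else 0 with hη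
  have hηb : ∀ ω, 0 ≤ η ω ∧ η ω ≤ c := by
    intro ω
    simp only [hη]
    split_ifs with h1 h2
    · exact ⟨hc0.le, le_refl c⟩
    · exact ⟨hlam0, hlamc⟩
    · exact ⟨le_refl 0, hc0.le⟩
  -- sum of p * η splits
  have hsplit : ∀ f : Ω → ℝ, ∑ ω, p ω * (f ω * η ω)
      = c * ∑ ω ∈ Finset.univ.filter (fun ω => ystar < X ω), p ω * f ω
        + lam * ∑ ω ∈ Finset.univ.filter (fun ω => X ω = ystar), p ω * f ω := by
    intro f
    rw [← Finset.sum_filter_add_sum_filter_not Finset.univ (fun ω => ystar < X ω)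
      (fun ω => p ω * (f ω * η ω))]
    congr 1
    · rw [Finset.mul_sum]
      apply Finset.sum_congr rfl
      intro ω hω
      rw [Finset.mem_filter] at hω
      simp only [hη]
      rw [if_pos hω.2]
      ring
    · rw [← Finset.sum_filter_add_sum_filter_not
        (Finset.univ.filter (fun ω => ¬ ystar < X ω)) (fun ω => X ω = ystar)
        (fun ω => p ω * (f ω * η ω))]
      have e1 : (Finset.univ.filter (fun ω => ¬ ystar < X ω)).filter (fun ω => X ω = ystar)
          = Finset.univ.filter (fun ω => X ω = ystar) := by
        rw [Finset.filter_filter]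
        apply Finset.filter_congr
        intro ω _
        constructor
        · exact fun h => h.2
        · intro h; exact ⟨by rw [h]; exact lt_irrefl _, h⟩
      have e2 : ∑ ω ∈ (Finset.univ.filter (fun ω => ¬ ystar < X ω)).filter
          (fun ω => ¬ X ω = ystar), p ω * (f ω * η ω) = 0 := by
        apply Finset.sum_eq_zero
        intro ω hω
        rw [Finset.mem_filter, Finset.mem_filter] at hω
        simp only [hη]
        rw [if_neg hω.1.2, if_neg hω.2, mul_zero, mul_zero]
      rw [e1, e2, add_zero, Finset.mul_sum]
      apply Finset.sum_congr rfl
      intro ω hω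
      rw [Finset.mem_filter] at hω
      simp only [hη]
      have hnot : ¬ ystar < X ω := by rw [hω.2]; exact lt_irrefl _
      rw [if_neg hnot, if_pos hω.2]
      ring
  have hηe : ∑ ω, p ω * η ω = 1 := by
    have := hsplit (fun _ => 1)
    simp only [one_mul, mul_one] at this
    have e1 : ∑ ω ∈ Finset.univ.filter (fun ω => ystar < X ω), p ω = A ystar := rfl
    have e2 : ∑ ω ∈ Finset.univ.filter (fun ω => X ω = ystar), p ω = q := rfl
    rw [this, e1, e2, hlam, div_mul_cancel₀ _ hqpos.ne']
    ring
  -- value of E(Xη) equals g ystar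
  have hval : ∑ ω, p ω * (X ω * η ω) = g ystar := by
    have key : ∀ ω, p ω * (X ω * η ω)
        = p ω * (c * max (X ω - ystar) 0) + ystar * (p ω * η ω) := by
      intro ω
      simp only [hη]
      rcases lt_trichotomy ystar (X ω) with h | h | h
      · rw [if_pos h, max_eq_left (by linarith)]
        ring
      · have hnot : ¬ ystar < X ω := by rw [h]; exact lt_irrefl _
        rw [if_neg hnot, if_pos h.symm, ← h, sub_self, max_self]
        ring
      · have hnot : ¬ ystar < X ω := by linarith
        have hne : X ω ≠ ystar := by linarith
        rw [if_neg hnot, if_neg hne, max_eq_right (by linarith)]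
        ring
    calc ∑ ω, p ω * (X ω * η ω)
        = ∑ ω, (p ω * (c * max (X ω - ystar) 0) + ystar * (p ω * η ω)) :=
          Finset.sum_congr rfl fun ω _ => key ω
      _ = c * (∑ ω, p ω * max (X ω - ystar) 0) + ystar * ∑ ω, p ω * η ω := by
          rw [Finset.sum_add_distrib, ← Finset.mul_sum, Finset.mul_sum, Finset.mul_sum]
          congr 1
          apply Finset.sum_congr rfl
          intro ω _; ring
      _ = g ystar := by rw [hηe, hg]; ring
  have hmem : g ystar ∈ S := ⟨η, ⟨hηb, hηe⟩, hval⟩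
  have hSne : S.Nonempty := ⟨_, hmem⟩
  have hbdd : BddAbove S := ⟨g 0, fun s hs => hub 0 s hs⟩
  have heq : sSup S = g ystar :=
    le_antisymm (csSup_le hSne (hub ystar)) (le_csSup hbdd hmem)
  constructor
  · exact ⟨ystar, heq.symm⟩
  · rintro r ⟨y, rfl⟩
    rw [heq]
    exact hub y _ hmem
end

section
/- Both V₁(X) = E(X₊) and V₂(X) = E(X) + E(X₊) satisfy inf over y ∈ ℝ of { y + Vᵢ(X − y) } = E(X) for every X ∈ L² on a finite probability space; hence two distinct coherent regret measures can generate the same risk measure via the trade-off formula. -/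
/-- Both `V₁(X) = E(X₊)` and `V₂(X) = E(X) + E(X₊)` generate the risk measure
`E(X)` via the trade-off formula, and `V₁ ≠ V₂`. -/
theorem stmt8 {Ω : Type} [Fintype Ω] (p : Ω → ℝ) (hp : ∀ ω, 0 < p ω)
    (hsum : ∑ ω, p ω = 1) :
    (∀ X : Ω → ℝ,
      sInf (Set.range fun y : ℝ => y + ∑ ω, p ω * max (X ω - y) 0) =
        ∑ ω, p ω * X ω) ∧
    (∀ X : Ω → ℝ,
      sInf (Set.range fun y : ℝ =>
          y + ((∑ ω, p ω * (X ω - y)) + ∑ ω, p ω * max (X ω - y) 0)) =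
        ∑ ω, p ω * X ω) ∧
    (fun X : Ω → ℝ => ∑ ω, p ω * max (X ω) 0) ≠
      (fun X : Ω → ℝ => (∑ ω, p ω * X ω) + ∑ ω, p ω * max (X ω) 0) := by
  have hne : Nonempty Ω := by
    by_contra h
    rw [not_nonempty_iff] at h
    rw [Finset.univ_eq_empty, Finset.sum_empty] at hsum
    norm_num at hsum
  have hp0 : ∀ ω, 0 ≤ p ω := fun ω => (hp ω).le
  have key : ∀ (X : Ω → ℝ) (y : ℝ),
      ∑ ω, p ω * (X ω - y) = (∑ ω, p ω * X ω) - y := by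
    intro X y
    rw [show (∑ ω, p ω * X ω) - y = (∑ ω, p ω * X ω) - (∑ ω, p ω) * y by
      rw [hsum, one_mul]]
    rw [Finset.sum_mul, ← Finset.sum_sub_distrib]
    congr 1; ext ω; ring
  have lb : ∀ (X : Ω → ℝ) (y : ℝ),
      (∑ ω, p ω * X ω) - y ≤ ∑ ω, p ω * max (X ω - y) 0 := by
    intro X y
    rw [← key X y]
    exact Finset.sum_le_sum fun ω _ =>
      mul_le_mul_of_nonneg_left (le_max_left _ _) (hp0 ω)
  have S0 : ∀ (X : Ω → ℝ) (y : ℝ), 0 ≤ ∑ ω, p ω * max (X ω - y) 0 := by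
    intro X y
    exact Finset.sum_nonneg fun ω _ =>
      mul_nonneg (hp0 ω) (le_max_right _ _)
  refine ⟨?_, ?_, ?_⟩
  · intro X
    obtain ⟨ω₀, -, hmin⟩ := Finset.exists_min_image Finset.univ X
      ⟨Classical.arbitrary Ω, Finset.mem_univ _⟩
    apply le_antisymm
    · apply csInf_le
      · refine ⟨∑ ω, p ω * X ω, ?_⟩
        rintro b ⟨y, rfl⟩
        have := lb X y
        simp only
        linarith
      · refine ⟨X ω₀, ?_⟩
        have hm : ∀ ω, max (X ω - X ω₀) 0 = X ω - X ω₀ := fun ω =>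
          max_eq_left (by have := hmin ω (Finset.mem_univ ω); linarith)
        simp only [hm]
        rw [key]
        ring
    · apply le_csInf (Set.range_nonempty _)
      rintro b ⟨y, rfl⟩
      have := lb X y
      simp only
      linarith
  · intro X
    obtain ⟨ω₁, -, hmax⟩ := Finset.exists_max_image Finset.univ X
      ⟨Classical.arbitrary Ω, Finset.mem_univ _⟩
    apply le_antisymm
    · apply csInf_le
      · refine ⟨∑ ω, p ω * X ω, ?_⟩
        rintro b ⟨y, rfl⟩
        have h1 := S0 X y
        have h2 := key X y
        simp only
        linarith
      · refine ⟨X ω₁, ?_⟩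
        have hm : ∀ ω, max (X ω - X ω₁) 0 = 0 := fun ω =>
          max_eq_right (by have := hmax ω (Finset.mem_univ ω); linarith)
        simp only [hm, mul_zero, Finset.sum_const_zero]
        rw [key]
        ring
    · apply le_csInf (Set.range_nonempty _)
      rintro b ⟨y, rfl⟩
      have h1 := S0 X y
      have h2 := key X y
      simp only
      linarith
  · intro h
    have := congrFun h (fun _ => (-1 : ℝ))
    simp only [max_eq_right (by norm_num : (-1 : ℝ) ≤ 0), mul_zero,
      Finset.sum_const_zero, mul_neg_one, Finset.sum_neg_distrib, hsum] at this
    linarith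
end

section
/- For 0 ≤ λ ≤ 1 and the regret measure V(X) = λ‖X₊‖₂ + (E(X))₊, the function y ↦ y + V(X − y) attains its minimum over ℝ at y = E(X), and the minimum value equals E(X) + λ‖(X − E(X))₊‖₂. Hence inf over y of { y + V(X−y) } recovers the mean-deviation-penalty risk measure R(X) = E(X) + λ‖(X − E(X))₊‖₂. -/
open Finset in
lemma aux_cs {Ω : Type} [Fintype Ω] (p : Ω → ℝ) (hp : ∀ ω, 0 ≤ p ω)
    (hsum : ∑ ω, p ω = 1) (h : Ω → ℝ) (hh : ∀ ω, 0 ≤ h ω) :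
    ∑ ω, p ω * h ω ≤ Real.sqrt (∑ ω, p ω * (h ω) ^ 2) := by
  have hnn : 0 ≤ ∑ ω, p ω * h ω :=
    Finset.sum_nonneg fun ω _ => mul_nonneg (hp ω) (hh ω)
  rw [Real.le_sqrt hnn]
  show _ ≤ ∑ ω, p ω * h ω ^ 2
  calc (∑ ω, p ω * h ω) ^ 2
      = (∑ ω : Ω, Real.sqrt (p ω) * (Real.sqrt (p ω) * h ω)) ^ 2 := by
        congr 1; apply Finset.sum_congr rfl; intro ω _
        rw [← mul_assoc, Real.mul_self_sqrt (hp ω)]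
    _ ≤ (∑ ω : Ω, Real.sqrt (p ω) ^ 2) * ∑ ω : Ω, (Real.sqrt (p ω) * h ω) ^ 2 :=
        Finset.sum_mul_sq_le_sq_mul_sq Finset.univ _ _
    _ = ∑ ω, p ω * (h ω) ^ 2 := by
        have : ∑ ω : Ω, Real.sqrt (p ω) ^ 2 = 1 := by
          rw [← hsum]; apply Finset.sum_congr rfl; intro ω _; exact Real.sq_sqrt (hp ω)
        rw [this, one_mul]; apply Finset.sum_congr rfl; intro ω _
        rw [mul_pow, Real.sq_sqrt (hp ω)]
  exact Finset.sum_nonneg fun ω _ => mul_nonneg (hp ω) (sq_nonneg _)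

lemma aux_key {Ω : Type} [Fintype Ω] (p : Ω → ℝ) (hp : ∀ ω, 0 ≤ p ω)
    (hsum : ∑ ω, p ω = 1) (g h : Ω → ℝ) (hg : ∀ ω, 0 ≤ g ω) (hh : ∀ ω, 0 ≤ h ω)
    (c : ℝ) (hc : 0 ≤ c) (hle : ∀ ω, g ω ≤ h ω + c) :
    Real.sqrt (∑ ω, p ω * (g ω) ^ 2) ≤ Real.sqrt (∑ ω, p ω * (h ω) ^ 2) + c := by
  set S := ∑ ω, p ω * (h ω) ^ 2 with hS
  have hSnn : 0 ≤ S := Finset.sum_nonneg fun ω _ => mul_nonneg (hp ω) (sq_nonneg _)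
  have h1 : Real.sqrt (∑ ω, p ω * (g ω) ^ 2) ≤ Real.sqrt (∑ ω, p ω * (h ω + c) ^ 2) := by
    apply Real.sqrt_le_sqrt
    apply Finset.sum_le_sum
    intro ω _
    apply mul_le_mul_of_nonneg_left _ (hp ω)
    exact pow_le_pow_left₀ (hg ω) (hle ω) 2
  refine h1.trans ?_
  have h2 : ∑ ω, p ω * (h ω + c) ^ 2 ≤ (Real.sqrt S + c) ^ 2 := by
    have expand : ∑ ω, p ω * (h ω + c) ^ 2
        = S + 2 * c * (∑ ω, p ω * h ω) + c ^ 2 := by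
      have : ∀ ω ∈ Finset.univ, p ω * (h ω + c) ^ 2
          = p ω * (h ω) ^ 2 + 2 * c * (p ω * h ω) + c ^ 2 * p ω := by
        intro ω _; ring
      rw [Finset.sum_congr rfl this, Finset.sum_add_distrib, Finset.sum_add_distrib,
        ← Finset.mul_sum, ← Finset.mul_sum, hsum, mul_one]
    have expand2 : (Real.sqrt S + c) ^ 2 = S + 2 * c * Real.sqrt S + c ^ 2 := by
      rw [add_sq, Real.sq_sqrt hSnn]; ring
    rw [expand, expand2]
    have := aux_cs p hp hsum h hh
    nlinarith [this]
  calc Real.sqrt (∑ ω, p ω * (h ω + c) ^ 2) ≤ Real.sqrt ((Real.sqrt S + c) ^ 2) :=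
        Real.sqrt_le_sqrt h2
    _ = Real.sqrt S + c := Real.sqrt_sq (by positivity)

/-- For the regret measure `V(Z) = λ‖Z₊‖₂ + (E Z)₊`, the function
`y ↦ y + V(X - y)` attains its minimum at `y = E X`, with minimum value
`E X + λ‖(X - E X)₊‖₂` (the mean-deviation-penalty risk measure). -/
theorem stmt10 {Ω : Type} [Fintype Ω] (p : Ω → ℝ) (hp : ∀ ω, 0 < p ω)
    (hsum : ∑ ω, p ω = 1) (lam : ℝ) (hlam0 : 0 ≤ lam) (hlam1 : lam ≤ 1)
    (V : (Ω → ℝ) → ℝ)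
    (hV : ∀ Z : Ω → ℝ,
      V Z = lam * Real.sqrt (∑ ω, p ω * (max (Z ω) 0) ^ 2) +
        max (∑ ω, p ω * Z ω) 0)
    (X : Ω → ℝ) :
    (∀ y : ℝ,
      (∑ ω, p ω * X ω) + V (fun ω => X ω - ∑ ω', p ω' * X ω') ≤
        y + V (fun ω => X ω - y)) ∧
    (∑ ω, p ω * X ω) + V (fun ω => X ω - ∑ ω', p ω' * X ω') =
      (∑ ω, p ω * X ω) +
        lam * Real.sqrt (∑ ω, p ω * (max (X ω - ∑ ω', p ω' * X ω') 0) ^ 2) ∧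
    sInf (Set.range fun y : ℝ => y + V (fun ω => X ω - y)) =
      (∑ ω, p ω * X ω) +
        lam * Real.sqrt (∑ ω, p ω * (max (X ω - ∑ ω', p ω' * X ω') 0) ^ 2) := by
  have hp' : ∀ ω, 0 ≤ p ω := fun ω => (hp ω).le
  set μ := ∑ ω, p ω * X ω with hμ
  have hEy : ∀ y : ℝ, ∑ ω, p ω * (X ω - y) = μ - y := by
    intro y
    have : ∀ ω ∈ Finset.univ, p ω * (X ω - y) = p ω * X ω - y * p ω := by
      intro ω _; ring
    rw [Finset.sum_congr rfl this, Finset.sum_sub_distrib, ← Finset.mul_sum, hsum, mul_one]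
  have hzero : ∑ ω, p ω * (X ω - μ) = 0 := by rw [hEy]; ring
  set N : ℝ → ℝ := fun y => Real.sqrt (∑ ω, p ω * (max (X ω - y) 0) ^ 2) with hN
  have part2 : μ + V (fun ω => X ω - μ) = μ + lam * N μ := by
    rw [hV, hzero, max_self]
    simp [hN]
  have part1 : ∀ y : ℝ, μ + V (fun ω => X ω - μ) ≤ y + V (fun ω => X ω - y) := by
    intro y
    rw [part2, hV, hEy]
    set c := max (y - μ) 0 with hcdef
    have hc : 0 ≤ c := le_max_right _ _
    have key : N μ ≤ N y + c := by
      apply aux_key p hp' hsum _ _ (fun ω => le_max_right _ _) (fun ω => le_max_right _ _) c hc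
      intro ω
      apply max_le
      · calc X ω - μ = (X ω - y) + (y - μ) := by ring
          _ ≤ max (X ω - y) 0 + c := add_le_add (le_max_left _ _) (le_max_left _ _)
      · exact add_nonneg (le_max_right _ _) hc
    have hlc : lam * N μ ≤ lam * N y + c := by
      calc lam * N μ ≤ lam * (N y + c) := mul_le_mul_of_nonneg_left key hlam0
        _ = lam * N y + lam * c := by ring
        _ ≤ lam * N y + c := by nlinarith
    rcases le_total y μ with h | h
    · have h1 : c = 0 := max_eq_right (by linarith)
      have h2 : max (μ - y) 0 = μ - y := max_eq_left (by linarith)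
      rw [h2]; rw [h1] at hlc; linarith
    · have h1 : c = y - μ := max_eq_left (by linarith)
      have h2 : max (μ - y) 0 = 0 := max_eq_right (by linarith)
      rw [h2]; rw [h1] at hlc; linarith
  refine ⟨part1, part2, ?_⟩
  have hleast : IsLeast (Set.range fun y : ℝ => y + V (fun ω => X ω - y)) (μ + lam * N μ) := by
    constructor
    · exact ⟨μ, part2⟩
    · rintro _ ⟨y, rfl⟩
      rw [← part2]; exact part1 y
  exact hleast.csInf_eq
end

section
/- Let 0 < λ < 1 and V(X) = λE(X) + E(X₊). Then for every X on a finite probability space, min over y ∈ ℝ of { y + V(X − y) } = λE(X) + (1−λ)·CVaR_λ(X), where CVaR_λ(X) = min over y of { y + (1/(1−λ))E((X−y)₊) }. In particular, the risk generated by the convex combination (1−λ)V₁ + λV₂ of V₁(X)=E(X₊) and V₂(X)=E(X)+E(X₊) is not E(X) (when X is non-constant). -/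
private lemma sInf_affine_range (a c : ℝ) (hc : 0 < c) (g : ℝ → ℝ) (m : ℝ)
    (hm : ∀ y, m ≤ g y) :
    sInf (Set.range fun y => a + c * g y) = a + c * sInf (Set.range g) := by
  have hg_bdd : BddBelow (Set.range g) := ⟨m, by rintro _ ⟨y, rfl⟩; exact hm y⟩
  have hf_bdd : BddBelow (Set.range fun y => a + c * g y) := by
    refine ⟨a + c * m, ?_⟩
    rintro _ ⟨y, rfl⟩
    have := hm y
    show a + c * m ≤ a + c * g y
    nlinarith
  apply le_antisymm
  · have h2 : (sInf (Set.range fun y => a + c * g y) - a) / c ≤ sInf (Set.range g) := by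
      apply le_csInf (Set.range_nonempty g)
      rintro _ ⟨y, rfl⟩
      rw [div_le_iff₀ hc]
      have h3 : sInf (Set.range fun y => a + c * g y) ≤ a + c * g y :=
        csInf_le hf_bdd ⟨y, rfl⟩
      nlinarith
    rw [div_le_iff₀ hc] at h2
    nlinarith
  · apply le_csInf (Set.range_nonempty _)
    rintro _ ⟨y, rfl⟩
    have := csInf_le hg_bdd ⟨y, rfl⟩
    show a + c * sInf (Set.range g) ≤ a + c * g y
    nlinarith

set_option maxHeartbeats 1000000 in
/-- For `V(Z) = λ E(Z) + E(Z₊)` with `0 < λ < 1`,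
`min_y { y + V(X - y) } = λ E(X) + (1-λ) CVaR_λ(X)`; in particular this is
not `E(X)` when `X` is non-constant. -/
theorem stmt14 {Ω : Type} [Fintype Ω] (p : Ω → ℝ) (hp : ∀ ω, 0 < p ω)
    (hsum : ∑ ω, p ω = 1) (lam : ℝ) (hlam0 : 0 < lam) (hlam1 : lam < 1)
    (X : Ω → ℝ) :
    sInf (Set.range fun y : ℝ =>
        y + (lam * (∑ ω, p ω * (X ω - y)) + ∑ ω, p ω * max (X ω - y) 0)) =
      lam * (∑ ω, p ω * X ω) +
        (1 - lam) *
          sInf (Set.range fun y : ℝ =>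
            y + (1 / (1 - lam)) * ∑ ω, p ω * max (X ω - y) 0) ∧
    ((¬ ∃ c : ℝ, ∀ ω, X ω = c) →
      sInf (Set.range fun y : ℝ =>
          y + (lam * (∑ ω, p ω * (X ω - y)) + ∑ ω, p ω * max (X ω - y) 0)) ≠
        ∑ ω, p ω * X ω) := by
  classical
  have h1l : (0:ℝ) < 1 - lam := by linarith
  set E : ℝ := ∑ ω, p ω * X ω with hE
  set S : ℝ → ℝ := fun y => ∑ ω, p ω * max (X ω - y) 0 with hSdef
  set g : ℝ → ℝ := fun y => y + (1 / (1 - lam)) * S y with hgdef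
  have hsum' : ∀ y : ℝ, ∑ ω, p ω * (X ω - y) = E - y := by
    intro y
    simp only [mul_sub, Finset.sum_sub_distrib, ← Finset.sum_mul, hsum, hE]
    ring
  have hfg : ∀ y : ℝ,
      y + (lam * (∑ ω, p ω * (X ω - y)) + ∑ ω, p ω * max (X ω - y) 0)
        = lam * E + (1 - lam) * g y := by
    intro y
    rw [hsum' y]
    simp only [hgdef, hSdef]
    field_simp
    ring
  have hfeq : (fun y : ℝ =>
      y + (lam * (∑ ω, p ω * (X ω - y)) + ∑ ω, p ω * max (X ω - y) 0))
        = fun y : ℝ => lam * E + (1 - lam) * g y := funext hfg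
  have hS0 : ∀ y, 0 ≤ S y := fun y =>
    Finset.sum_nonneg fun ω _ => mul_nonneg (hp ω).le (le_max_right _ _)
  have hSE : ∀ y, E - y ≤ S y := by
    intro y
    rw [← hsum' y]
    exact Finset.sum_le_sum fun ω _ =>
      mul_le_mul_of_nonneg_left (le_max_left _ _) (hp ω).le
  have hinv : (1:ℝ) ≤ 1 / (1 - lam) := by
    rw [le_div_iff₀ h1l]; nlinarith
  have hSinv : ∀ y, S y ≤ (1 / (1 - lam)) * S y := by
    intro y
    nlinarith [hS0 y, hinv]
  have hgE : ∀ y, E ≤ g y := by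
    intro y
    rcases le_total E y with h | h
    · have h1 := hS0 y
      have h2 : 0 ≤ (1 / (1 - lam)) * S y := by positivity
      simp only [hgdef]; linarith
    · have h1 := hSE y
      have h2 := hSinv y
      simp only [hgdef]; linarith
  have key : sInf (Set.range fun y : ℝ =>
      y + (lam * (∑ ω, p ω * (X ω - y)) + ∑ ω, p ω * max (X ω - y) 0))
        = lam * E + (1 - lam) * sInf (Set.range g) := by
    rw [hfeq]
    exact sInf_affine_range (lam * E) (1 - lam) h1l g E hgE
  refine ⟨key, ?_⟩
  intro hX heq
  rw [key] at heq
  -- Ω is nonempty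
  have huniv : (Finset.univ : Finset Ω).Nonempty := by
    rcases (Finset.univ : Finset Ω).eq_empty_or_nonempty with h | h
    · rw [h] at hsum; simp at hsum
    · exact h
  push_neg at hX
  obtain ⟨ω₀, -, hmax⟩ := Finset.exists_max_image Finset.univ X huniv
  obtain ⟨ω₁, -, hmin⟩ := Finset.exists_min_image Finset.univ X huniv
  obtain ⟨ωa, hωa⟩ := hX (X ω₀)
  obtain ⟨ωb, hωb⟩ := hX (X ω₁)
  have hq1 : p ω₀ ≤ 1 := by
    rw [← hsum]
    exact Finset.single_le_sum (fun ω _ => (hp ω).le) (Finset.mem_univ ω₀)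
  have hEa : E < X ω₀ := by
    have hlt : ∑ ω, p ω * X ω < ∑ ω, p ω * X ω₀ := by
      apply Finset.sum_lt_sum (fun ω _ =>
        mul_le_mul_of_nonneg_left (hmax ω (Finset.mem_univ ω)) (hp ω).le)
      refine ⟨ωa, Finset.mem_univ ωa, ?_⟩
      have hlt' : X ωa < X ω₀ := lt_of_le_of_ne (hmax ωa (Finset.mem_univ ωa)) hωa
      exact mul_lt_mul_of_pos_left hlt' (hp ωa)
    rw [← Finset.sum_mul, hsum, one_mul] at hlt
    exact hlt
  have hbE : X ω₁ < E := by
    have hlt : ∑ ω, p ω * X ω₁ < ∑ ω, p ω * X ω := by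
      apply Finset.sum_lt_sum (fun ω _ =>
        mul_le_mul_of_nonneg_left (hmin ω (Finset.mem_univ ω)) (hp ω).le)
      refine ⟨ωb, Finset.mem_univ ωb, ?_⟩
      have hlt' : X ω₁ < X ωb := lt_of_le_of_ne (hmin ωb (Finset.mem_univ ωb)) (Ne.symm hωb)
      exact mul_lt_mul_of_pos_left hlt' (hp ωb)
    rw [← Finset.sum_mul, hsum, one_mul] at hlt
    exact hlt
  set q : ℝ := p ω₀ with hq
  set r : ℝ := p ω₁ with hr
  set s : ℝ := min lam r with hs
  set ε : ℝ := min (q * (X ω₀ - E)) (s * (E - X ω₁)) with hε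
  have hq0 : 0 < q := hp ω₀
  have hr0 : 0 < r := hp ω₁
  have hs0 : 0 < s := lt_min hlam0 hr0
  have hεpos : 0 < ε := lt_min (by nlinarith) (by nlinarith)
  have hε1 : ε ≤ q * (X ω₀ - E) := min_le_left _ _
  have hε2 : ε ≤ s * (E - X ω₁) := min_le_right _ _
  have hs1 : s ≤ lam := min_le_left _ _
  have hs2 : s ≤ r := min_le_right _ _
  -- key lower bound on g
  have hbound : ∀ y : ℝ, E + ε ≤ g y := by
    intro y
    have hSq : q * max (X ω₀ - y) 0 ≤ S y :=
      Finset.single_le_sum (f := fun ω => p ω * max (X ω - y) 0)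
        (fun ω _ => mul_nonneg (hp ω).le (le_max_right _ _)) (Finset.mem_univ ω₀)
    rcases le_total E y with hy | hy
    · -- y ≥ E : use the max witness
      have h1 : q * max (X ω₀ - y) 0 ≤ (1 / (1 - lam)) * S y :=
        le_trans hSq (hSinv y)
      have h2 : y + q * max (X ω₀ - y) 0 ≤ g y := by
        simp only [hgdef]; linarith
      rcases le_total y (X ω₀) with hya | hya
      · rw [max_eq_left (by linarith)] at h2
        nlinarith
      · rw [max_eq_right (by linarith)] at h2
        nlinarith
    · -- y ≤ E : use the min witness
      have h1 : S y = (∑ ω, p ω * (X ω - y)) + ∑ ω, p ω * max (y - X ω) 0 := by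
        simp only [hSdef]
        rw [← Finset.sum_add_distrib]
        apply Finset.sum_congr rfl
        intro ω _
        rcases le_total (X ω) y with h | h
        · rw [max_eq_right (by linarith : X ω - y ≤ 0),
            max_eq_left (by linarith : (0:ℝ) ≤ y - X ω)]
          ring
        · rw [max_eq_left (by linarith : (0:ℝ) ≤ X ω - y),
            max_eq_right (by linarith : y - X ω ≤ 0)]
          ring
      have h2 : r * max (y - X ω₁) 0 ≤ ∑ ω, p ω * max (y - X ω) 0 :=
        Finset.single_le_sum (f := fun ω => p ω * max (y - X ω) 0)
          (fun ω _ => mul_nonneg (hp ω).le (le_max_right _ _)) (Finset.mem_univ ω₁)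
      have h3 : E - y + r * max (y - X ω₁) 0 ≤ S y := by
        rw [h1, hsum' y]; linarith
      have hgy : (1 - lam) * g y = (1 - lam) * y + S y := by
        simp only [hgdef]
        field_simp
      -- suffices to show (1-lam)*(E+ε) ≤ (1-lam)*g y
      have hgoal : (1 - lam) * (E + ε) ≤ (1 - lam) * y + S y → E + ε ≤ g y := by
        intro h
        rw [← hgy] at h
        exact le_of_mul_le_mul_left h h1l
      apply hgoal
      rcases le_total y (X ω₁) with hyb | hyb
      · rw [max_eq_right (by linarith : y - X ω₁ ≤ 0)] at h3
        linarith [h3, hε2, mul_nonneg (by linarith : (0:ℝ) ≤ lam - s)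
            (by linarith : (0:ℝ) ≤ E - X ω₁),
          mul_nonneg hlam0.le (by linarith : (0:ℝ) ≤ X ω₁ - y),
          mul_nonneg hlam0.le hεpos.le]
      · rw [max_eq_left (by linarith : (0:ℝ) ≤ y - X ω₁)] at h3
        linarith [h3, hε2, mul_nonneg (by linarith : (0:ℝ) ≤ lam - s)
            (by linarith : (0:ℝ) ≤ E - y),
          mul_nonneg (by linarith : (0:ℝ) ≤ r - s) (by linarith : (0:ℝ) ≤ y - X ω₁),
          mul_nonneg hlam0.le hεpos.le]
  have hsg : E + ε ≤ sInf (Set.range g) := by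
    apply le_csInf (Set.range_nonempty g)
    rintro _ ⟨y, rfl⟩
    exact hbound y
  nlinarith [hsg, hεpos, h1l]
end
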